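/- Define the regularized three-body Hamiltonian 𝓗₀^E(x, y, ξ, η) = |η|²/(8α₁α₂) − |ξ|² (E + α₁/|α₂ξ² − x| + α₂/|α₁ξ² + x| − |y|²/2) for x, ξ ∈ ℂ, y, η ∈ ℂ, α₁ + α₂ = 1, α₁, α₂ > 0. Then every point of M_E = {(x, y, 0, 0) : |y|²/2 − 1/|x| < E, x ≠ 0} is a critical point of 𝓗₀^E with 𝓗₀^E = 0 there, and the Hessian of 𝓗₀^E at such a point, restricted to the (ξ, η)-variables, is the quadratic form |η|²/(4α₁α₂) − 2(E + 1/|x| − |y|²/2)|ξ|², which is nondegenerate with eigenvalue structure giving linearization eigenvalues ±√((E + 1/|x| − |y|²/2)/(2α₁α₂)). -/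

import Mathlib

set_option maxHeartbeats 1000000
set_option synthInstance.maxHeartbeats 200000

/-- The regularized three-body Hamiltonian
`𝓗₀^E(x, y, ξ, η) = |η|²/(8α₁α₂) − |ξ|²(E + α₁/|α₂ξ² − x| + α₂/|α₁ξ² + x| − |y|²/2)`. -/
noncomputable def H3body (α₁ α₂ E : ℝ) (z : ℂ × ℂ × ℂ × ℂ) : ℝ :=
  ‖z.2.2.2‖ ^ 2 / (8*α₁*α₂) -
    ‖z.2.2.1‖ ^ 2 *
      (E + α₁ / ‖(α₂:ℂ) * z.2.2.1^2 - z.1‖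
         + α₂ / ‖(α₁:ℂ) * z.2.2.1^2 + z.1‖
         - ‖z.2.1‖ ^ 2 / 2)

open Complex ContinuousLinearMap

noncomputable section

abbrev Tsp := ℂ × ℂ × ℂ × ℂ

def P1 : Tsp →L[ℝ] ℂ := fst ℝ ℂ (ℂ × ℂ × ℂ)
def P3 : Tsp →L[ℝ] ℂ :=
  (fst ℝ ℂ ℂ).comp ((snd ℝ ℂ (ℂ × ℂ)).comp (snd ℝ ℂ (ℂ × ℂ × ℂ)))
def P4 : Tsp →L[ℝ] ℂ :=
  (snd ℝ ℂ ℂ).comp ((snd ℝ ℂ (ℂ × ℂ)).comp (snd ℝ ℂ (ℂ × ℂ × ℂ)))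

def R3 : Tsp →L[ℝ] ℝ := Complex.reCLM.comp P3
def I3 : Tsp →L[ℝ] ℝ := Complex.imCLM.comp P3
def R4 : Tsp →L[ℝ] ℝ := Complex.reCLM.comp P4
def I4 : Tsp →L[ℝ] ℝ := Complex.imCLM.comp P4

@[simp] lemma R3_apply (z : Tsp) : R3 z = z.2.2.1.re := rfl
@[simp] lemma I3_apply (z : Tsp) : I3 z = z.2.2.1.im := rfl
@[simp] lemma R4_apply (z : Tsp) : R4 z = z.2.2.2.re := rfl
@[simp] lemma I4_apply (z : Tsp) : I4 z = z.2.2.2.im := rfl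

def TB : Tsp →L[ℝ] Tsp →L[ℝ] ℝ := (2:ℝ) • (R3.smulRight R3 + I3.smulRight I3)
def TQ : Tsp →L[ℝ] Tsp →L[ℝ] ℝ := (2:ℝ) • (R4.smulRight R4 + I4.smulRight I4)

@[simp] lemma TB_apply (z w : Tsp) :
    TB z w = 2 * (z.2.2.1.re * w.2.2.1.re) + 2 * (z.2.2.1.im * w.2.2.1.im) := by
  simp [TB]

@[simp] lemma TQ_apply (z w : Tsp) :
    TQ z w = 2 * (z.2.2.2.re * w.2.2.2.re) + 2 * (z.2.2.2.im * w.2.2.2.im) := by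
  simp [TQ]

lemma hasFDerivAt_b (z : Tsp) :
    HasFDerivAt (fun z : Tsp => Complex.normSq z.2.2.1) (TB z) z := by
  have h : (fun z : Tsp => Complex.normSq z.2.2.1)
      = fun z : Tsp => R3 z * R3 z + I3 z * I3 z := by
    funext w; simp [Complex.normSq_apply]
  rw [h]
  have heq : TB z = R3 z • R3 + R3 z • R3 + (I3 z • I3 + I3 z • I3) :=
    ContinuousLinearMap.ext fun w => by simp; ring
  exact heq ▸ ((R3.hasFDerivAt (x := z)).mul (R3.hasFDerivAt (x := z))).add
    ((I3.hasFDerivAt (x := z)).mul (I3.hasFDerivAt (x := z)))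

lemma hasFDerivAt_q (z : Tsp) :
    HasFDerivAt (fun z : Tsp => Complex.normSq z.2.2.2) (TQ z) z := by
  have h : (fun z : Tsp => Complex.normSq z.2.2.2)
      = fun z : Tsp => R4 z * R4 z + I4 z * I4 z := by
    funext w; simp [Complex.normSq_apply]
  rw [h]
  have heq : TQ z = R4 z • R4 + R4 z • R4 + (I4 z • I4 + I4 z • I4) :=
    ContinuousLinearMap.ext fun w => by simp; ring
  exact heq ▸ ((R4.hasFDerivAt (x := z)).mul (R4.hasFDerivAt (x := z))).add
    ((I4.hasFDerivAt (x := z)).mul (I4.hasFDerivAt (x := z)))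

lemma contDiff_normSq : ContDiff ℝ 2 (fun w : ℂ => Complex.normSq w) := by
  have h : (fun w : ℂ => Complex.normSq w)
      = fun w : ℂ => Complex.reCLM w * Complex.reCLM w + Complex.imCLM w * Complex.imCLM w := by
    funext w; simp [Complex.normSq_apply]
  rw [h]
  exact (Complex.reCLM.contDiff.mul Complex.reCLM.contDiff).add
    (Complex.imCLM.contDiff.mul Complex.imCLM.contDiff)

lemma hessian_aux (c1 c2 : ℝ) (K : Tsp → ℝ) (x y : ℂ)
    (hK : ContDiffAt ℝ 2 K ((x, y, 0, 0) : Tsp)) (hKp : K ((x, y, 0, 0) : Tsp) = c2) :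
    fderiv ℝ (fun z : Tsp => c1 * Complex.normSq z.2.2.2 - Complex.normSq z.2.2.1 * K z)
      ((x, y, 0, 0) : Tsp) = 0 ∧
    ∀ w w' : Tsp,
      iteratedFDeriv ℝ 2
          (fun z : Tsp => c1 * Complex.normSq z.2.2.2 - Complex.normSq z.2.2.1 * K z)
          ((x, y, 0, 0) : Tsp) ![w, w']
        = c1 * (2 * (w.2.2.2.re * w'.2.2.2.re) + 2 * (w.2.2.2.im * w'.2.2.2.im))
          - c2 * (2 * (w.2.2.1.re * w'.2.2.1.re) + 2 * (w.2.2.1.im * w'.2.2.1.im)) := by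
  set p : Tsp := (x, y, 0, 0) with hp
  set H : Tsp → ℝ := fun z => c1 * Complex.normSq z.2.2.2 - Complex.normSq z.2.2.1 * K z with hH
  set L : Tsp → ℝ := fun z => K z - c2 with hLdef
  have hL : ContDiffAt ℝ 2 L p := hK.sub contDiffAt_const
  have hLp : L p = 0 := by simp [hLdef, hKp]
  have hbp : Complex.normSq p.2.2.1 = 0 := by simp [hp]
  have hTBp : TB p = 0 := ContinuousLinearMap.ext fun w => by simp [hp]
  have hTQp : TQ p = 0 := ContinuousLinearMap.ext fun w => by simp [hp]
  -- pointwise derivative of the quadratic part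
  have hq : ∀ z : Tsp, HasFDerivAt
      (fun z : Tsp => c1 * Complex.normSq z.2.2.2 - c2 * Complex.normSq z.2.2.1)
      ((c1 • TQ - c2 • TB) z) z := by
    intro z
    have h1 := ((hasFDerivAt_q z).const_mul c1).sub ((hasFDerivAt_b z).const_mul c2)
    have heq : (c1 • TQ - c2 • TB) z = c1 • TQ z - c2 • TB z := by
      simp
    rw [heq]; exact h1
  -- neighborhood formula for the derivative of H
  set D : Tsp → (Tsp →L[ℝ] ℝ) := fun z =>
    (c1 • TQ - c2 • TB) z - (Complex.normSq z.2.2.1 • fderiv ℝ L z + L z • TB z) with hD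
  have hev : ∀ᶠ z in nhds p, DifferentiableAt ℝ L z := by
    filter_upwards [hL.eventually (by norm_num)] with z hz
    exact hz.differentiableAt (by norm_num)
  have key : ∀ z : Tsp, DifferentiableAt ℝ L z → fderiv ℝ H z = D z := by
    intro z hz
    have hHeq : H = fun z : Tsp =>
        (c1 * Complex.normSq z.2.2.2 - c2 * Complex.normSq z.2.2.1)
        - Complex.normSq z.2.2.1 * L z := by
      funext w; simp [hH, hLdef]; ring
    rw [hHeq, fderiv_fun_sub ((hq z).differentiableAt)
        (show DifferentiableAt ℝ (fun z : Tsp => Complex.normSq z.2.2.1 * L z) z from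
          ((hasFDerivAt_b z).differentiableAt).mul hz),
      (hq z).fderiv, fderiv_fun_mul (hasFDerivAt_b z).differentiableAt hz,
      (hasFDerivAt_b z).fderiv]
  have hDev : fderiv ℝ H =ᶠ[nhds p] D := hev.mono key
  constructor
  · rw [hDev.self_of_nhds]
    show (c1 • TQ - c2 • TB) p - (Complex.normSq p.2.2.1 • fderiv ℝ L p + L p • TB p) = 0
    rw [hbp, hLp, hTBp]
    simp [hTQp, hTBp]
  · intro w w'
    rw [iteratedFDeriv_two_apply, hDev.fderiv_eq]
    have hcd : ContDiffAt ℝ 1 (fderiv ℝ L) p := hL.fderiv_right (by norm_num)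
    have hDL' : DifferentiableAt ℝ (fderiv ℝ L) p := hcd.differentiableAt (by norm_num)
    have h2 : HasFDerivAt (fun z : Tsp => Complex.normSq z.2.2.1 • fderiv ℝ L z)
        (0 : Tsp →L[ℝ] Tsp →L[ℝ] ℝ) p := by
      have h := (hasFDerivAt_b p).smul hDL'.hasFDerivAt
      rw [hbp, hTBp] at h
      have e : (0:ℝ) • fderiv ℝ (fderiv ℝ L) p
          + ContinuousLinearMap.smulRight (0 : Tsp →L[ℝ] ℝ) (fderiv ℝ L p)
          = (0 : Tsp →L[ℝ] Tsp →L[ℝ] ℝ) :=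
        ContinuousLinearMap.ext fun a => ContinuousLinearMap.ext fun b => by simp
      rwa [e] at h
    have h3 : HasFDerivAt (fun z : Tsp => L z • TB z)
        (0 : Tsp →L[ℝ] Tsp →L[ℝ] ℝ) p := by
      have h := (hL.differentiableAt (by norm_num)).hasFDerivAt.smul (TB.hasFDerivAt (x := p))
      rw [hLp, hTBp] at h
      have e : (0:ℝ) • TB + (fderiv ℝ L p).smulRight (0 : Tsp →L[ℝ] ℝ)
          = (0 : Tsp →L[ℝ] Tsp →L[ℝ] ℝ) :=
        ContinuousLinearMap.ext fun a => ContinuousLinearMap.ext fun b => by simp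
      rwa [e] at h
    have hDfd : HasFDerivAt D (c1 • TQ - c2 • TB) p := by
      have := ((c1 • TQ - c2 • TB).hasFDerivAt (x := p)).sub (h2.add h3)
      rw [add_zero, sub_zero] at this
      exact this
    rw [hDfd.fderiv]
    show ((c1 • TQ - c2 • TB) w) w' = _
    simp


/-- Points of `M_E = {(x, y, 0, 0) : |y|²/2 − 1/|x| < E}` are critical points of `𝓗₀^E`
with value `0`; the Hessian restricted to the `(ξ, η)`-variables is the nondegenerate
quadratic form `|η|²/(4α₁α₂) − 2(E + 1/|x| − |y|²/2)|ξ|²`, whose Hamiltonian linearization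
has real eigenvalues `±√((E + 1/|x| − |y|²/2)/(2α₁α₂))`. -/
theorem stmt15 (α₁ α₂ E : ℝ) (hα₁ : 0 < α₁) (hα₂ : 0 < α₂) (hsum : α₁ + α₂ = 1)
    (x y : ℂ) (hx : x ≠ 0)
    (hM : ‖y‖ ^ 2 / 2 - 1 / ‖x‖ < E)
    (c : ℝ) (hc : c = E + 1 / ‖x‖ - ‖y‖ ^ 2 / 2)
    (ν : ℝ) (hν : ν = Real.sqrt (c / (2*α₁*α₂))) :
    H3body α₁ α₂ E (x, y, 0, 0) = 0 ∧
    fderiv ℝ (H3body α₁ α₂ E) (x, y, 0, 0) = 0 ∧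
    (∀ ξ η : ℂ,
      iteratedFDeriv ℝ 2 (H3body α₁ α₂ E) (x, y, 0, 0)
          ![((0:ℂ), (0:ℂ), ξ, η), ((0:ℂ), (0:ℂ), ξ, η)]
        = ‖η‖ ^ 2 / (4*α₁*α₂) - 2 * c * ‖ξ‖ ^ 2) ∧
    (∀ ξ η : ℂ,
      (∀ ξ' η' : ℂ,
        iteratedFDeriv ℝ 2 (H3body α₁ α₂ E) (x, y, 0, 0)
            ![((0:ℂ), (0:ℂ), ξ, η), ((0:ℂ), (0:ℂ), ξ', η')] = 0) →
      ξ = 0 ∧ η = 0) ∧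
    (∃ v : ℂ × ℂ, v ≠ 0 ∧
        ((1/(4*α₁*α₂)) • v.2, (2*c) • v.1) = ν • v) ∧
    (∃ w : ℂ × ℂ, w ≠ 0 ∧
        ((1/(4*α₁*α₂)) • w.2, (2*c) • w.1) = (-ν) • w) := by
  have hxa : 0 < ‖x‖ := norm_pos_iff.mpr hx
  have hc0 : 0 < c := by rw [hc]; linarith
  have haa : (0:ℝ) < α₁ * α₂ := mul_pos hα₁ hα₂
  set c1 : ℝ := (8*α₁*α₂)⁻¹ with hc1
  set K : Tsp → ℝ := fun z =>
    E + α₁ / ‖(α₂:ℂ) * z.2.2.1^2 - z.1‖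
      + α₂ / ‖(α₁:ℂ) * z.2.2.1^2 + z.1‖
      - Complex.normSq z.2.1 / 2 with hKdef
  have hfun : H3body α₁ α₂ E
      = fun z : Tsp => c1 * Complex.normSq z.2.2.2 - Complex.normSq z.2.2.1 * K z := by
    funext z
    simp only [H3body, hKdef, Complex.sq_norm, hc1]
    ring
  -- smoothness of K at the point
  have hg1 : ContDiff ℝ 2 (fun z : Tsp => (α₂:ℂ) * z.2.2.1^2 - z.1) :=
    (contDiff_const.mul ((contDiff_snd.snd.fst).pow 2)).sub contDiff_fst
  have hg2 : ContDiff ℝ 2 (fun z : Tsp => (α₁:ℂ) * z.2.2.1^2 + z.1) :=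
    (contDiff_const.mul ((contDiff_snd.snd.fst).pow 2)).add contDiff_fst
  have hval1 : (α₂:ℂ) * (0:ℂ)^2 - x = -x := by ring
  have hval2 : (α₁:ℂ) * (0:ℂ)^2 + x = x := by ring
  have hpos1 : 0 < Complex.normSq ((α₂:ℂ) * (0:ℂ)^2 - x) := by
    rw [hval1]; exact Complex.normSq_pos.mpr (neg_ne_zero.mpr hx)
  have hpos2 : 0 < Complex.normSq ((α₁:ℂ) * (0:ℂ)^2 + x) := by
    rw [hval2]; exact Complex.normSq_pos.mpr hx
  have habs1 : ContDiffAt ℝ 2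
      (fun z : Tsp => α₁ / ‖(α₂:ℂ) * z.2.2.1^2 - z.1‖) ((x, y, 0, 0) : Tsp) := by
    have heq : (fun z : Tsp => α₁ / ‖(α₂:ℂ) * z.2.2.1^2 - z.1‖)
        = fun z : Tsp => α₁ / Real.sqrt (Complex.normSq ((α₂:ℂ) * z.2.2.1^2 - z.1)) := by
      funext z; rw [Complex.norm_def]
    rw [heq]
    have h1 : ContDiffAt ℝ 2
        (fun z : Tsp => Complex.normSq ((α₂:ℂ) * z.2.2.1^2 - z.1)) ((x, y, 0, 0) : Tsp) :=
      (contDiff_normSq.comp hg1).contDiffAt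
    have h2 := h1.sqrt (ne_of_gt hpos1)
    exact contDiffAt_const.div h2 (Real.sqrt_ne_zero'.mpr hpos1)
  have habs2 : ContDiffAt ℝ 2
      (fun z : Tsp => α₂ / ‖(α₁:ℂ) * z.2.2.1^2 + z.1‖) ((x, y, 0, 0) : Tsp) := by
    have heq : (fun z : Tsp => α₂ / ‖(α₁:ℂ) * z.2.2.1^2 + z.1‖)
        = fun z : Tsp => α₂ / Real.sqrt (Complex.normSq ((α₁:ℂ) * z.2.2.1^2 + z.1)) := by
      funext z; rw [Complex.norm_def]
    rw [heq]
    have h1 : ContDiffAt ℝ 2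
        (fun z : Tsp => Complex.normSq ((α₁:ℂ) * z.2.2.1^2 + z.1)) ((x, y, 0, 0) : Tsp) :=
      (contDiff_normSq.comp hg2).contDiffAt
    have h2 := h1.sqrt (ne_of_gt hpos2)
    exact contDiffAt_const.div h2 (Real.sqrt_ne_zero'.mpr hpos2)
  have hy2 : ContDiffAt ℝ 2 (fun z : Tsp => Complex.normSq z.2.1 / 2) ((x, y, 0, 0) : Tsp) :=
    ((contDiff_normSq.comp contDiff_snd.fst).div_const 2).contDiffAt
  have hK : ContDiffAt ℝ 2 K ((x, y, 0, 0) : Tsp) :=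
    ((contDiffAt_const.add habs1).add habs2).sub hy2
  have hKp : K ((x, y, 0, 0) : Tsp) = c := by
    show E + α₁ / ‖(α₂:ℂ) * (0:ℂ)^2 - x‖
        + α₂ / ‖(α₁:ℂ) * (0:ℂ)^2 + x‖ - Complex.normSq y / 2 = c
    rw [hval1, hval2, norm_neg, ← Complex.sq_norm, hc]
    have h12 : α₁ / ‖x‖ + α₂ / ‖x‖ = 1 / ‖x‖ := by
      rw [← add_div, hsum]
    linarith [h12]
  obtain ⟨hfd, hhess⟩ := hessian_aux c1 c K x y hK hKp
  refine ⟨?_, ?_, ?_, ?_, ?_, ?_⟩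
  · simp [H3body]
  · rw [hfun]; exact hfd
  · intro ξ η
    rw [hfun, hhess ((0:ℂ), (0:ℂ), ξ, η) ((0:ℂ), (0:ℂ), ξ, η)]
    rw [Complex.sq_norm, Complex.sq_norm, Complex.normSq_apply, Complex.normSq_apply]
    have h8 : (8*α₁*α₂ : ℝ) ≠ 0 := by positivity
    have h4 : (4*α₁*α₂ : ℝ) ≠ 0 := by positivity
    rw [hc1]
    field_simp [hc1]
    ring
  · intro ξ η h
    rw [hfun] at h
    have h1 := h ξ 0
    rw [hhess ((0:ℂ), (0:ℂ), ξ, η) ((0:ℂ), (0:ℂ), ξ, 0)] at h1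
    have h2 := h 0 η
    rw [hhess ((0:ℂ), (0:ℂ), ξ, η) ((0:ℂ), (0:ℂ), 0, η)] at h2
    simp only [Complex.zero_re, Complex.zero_im, mul_zero, zero_mul, add_zero, zero_add] at h1 h2
    have hc1pos : 0 < c1 := by rw [hc1]; positivity
    constructor
    · have hnsq : Complex.normSq ξ = 0 := by
        rw [Complex.normSq_apply]; nlinarith
      exact Complex.normSq_eq_zero.mp hnsq
    · have hnsq : Complex.normSq η = 0 := by
        rw [Complex.normSq_apply]; nlinarith
      exact Complex.normSq_eq_zero.mp hnsq
  · refine ⟨((1:ℂ), ((4*α₁*α₂*ν : ℝ) : ℂ)), ?_, ?_⟩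
    · intro hcontra
      rw [Prod.ext_iff] at hcontra
      exact one_ne_zero hcontra.1
    · have h4 : (4*α₁*α₂ : ℝ) ≠ 0 := by positivity
      have hν2' : 2*α₁*α₂*ν^2 = c := by
        rw [hν, Real.sq_sqrt (by positivity)]
        field_simp
      have e1 : (1/(4*α₁*α₂) : ℝ) * (4*α₁*α₂*ν) = ν := by field_simp; try ring
      have e2 : (2*c : ℝ) = ν * (4*α₁*α₂*ν) := by linear_combination (-2:ℝ) * hν2'
      have h1 : (1/(4*α₁*α₂) : ℝ) • (((4*α₁*α₂*ν : ℝ)) : ℂ) = ν • (1:ℂ) := by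
        rw [Complex.real_smul, Complex.real_smul, mul_one]
        exact_mod_cast e1
      have h2 : (2*c : ℝ) • (1:ℂ) = ν • (((4*α₁*α₂*ν : ℝ)) : ℂ) := by
        rw [Complex.real_smul, Complex.real_smul, mul_one]
        exact_mod_cast e2
      show ((1/(4*α₁*α₂) : ℝ) • (((4*α₁*α₂*ν : ℝ)) : ℂ), (2*c : ℝ) • (1:ℂ))
          = ν • ((1:ℂ), (((4*α₁*α₂*ν : ℝ)) : ℂ))
      rw [Prod.smul_mk, h1, h2]
  · refine ⟨((1:ℂ), ((-(4*α₁*α₂*ν) : ℝ) : ℂ)), ?_, ?_⟩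
    · intro hcontra
      rw [Prod.ext_iff] at hcontra
      exact one_ne_zero hcontra.1
    · have h4 : (4*α₁*α₂ : ℝ) ≠ 0 := by positivity
      have hν2' : 2*α₁*α₂*ν^2 = c := by
        rw [hν, Real.sq_sqrt (by positivity)]
        field_simp
      have e1 : (1/(4*α₁*α₂) : ℝ) * (-(4*α₁*α₂*ν)) = -ν := by field_simp; try ring
      have e2 : (2*c : ℝ) = (-ν) * (-(4*α₁*α₂*ν)) := by linear_combination (-2:ℝ) * hν2'
      have h1 : (1/(4*α₁*α₂) : ℝ) • (((-(4*α₁*α₂*ν) : ℝ)) : ℂ) = (-ν) • (1:ℂ) := by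
        rw [Complex.real_smul, Complex.real_smul, mul_one]
        exact_mod_cast e1
      have h2 : (2*c : ℝ) • (1:ℂ) = (-ν) • (((-(4*α₁*α₂*ν) : ℝ)) : ℂ) := by
        rw [Complex.real_smul, Complex.real_smul, mul_one]
        exact_mod_cast e2
      show ((1/(4*α₁*α₂) : ℝ) • (((-(4*α₁*α₂*ν) : ℝ)) : ℂ), (2*c : ℝ) • (1:ℂ))
          = (-ν) • ((1:ℂ), (((-(4*α₁*α₂*ν) : ℝ)) : ℂ))
      rw [Prod.smul_mk, h1, h2]

end
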